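/- Let S be a set and f : Set S → Set S be monotone (with respect to ⊆). If (X, ≺) is a support ordering for f (i.e. X ⊆ S, ≺ ⊆ X × X, and for every x ∈ X, x ∈ f({x' ∈ X | x' ≺ x})) and ≺ is well-founded, then X is contained in the least fixpoint of f. -/
import Mathlib


/-- `(X, r)` is a support ordering for `f`: every `x ∈ X` lies in
`f` applied to the set of its `r`-predecessors within `X`. -/
def IsSupportOrdering {S : Type*} (f : Set S → Set S) (X : Set S) (r : S → S → Prop) : Prop :=
  ∀ x ∈ X, x ∈ f {x' ∈ X | r x' x}

theorem well_supported_subset_lfp {S : Type*} (f : Set S → Set S) (hf : Monotone f)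
    (X : Set S) (r : S → S → Prop)
    (hrX : ∀ x y, r x y → x ∈ X ∧ y ∈ X)
    (hsupp : IsSupportOrdering f X r)
    (hwf : WellFounded r) :
    X ⊆ sInf {Y : Set S | f Y ⊆ Y} := by
  intro x hx
  have H : ∀ x, x ∈ X → x ∈ sInf {Y : Set S | f Y ⊆ Y} := by
    intro x
    induction x using hwf.induction with
    | _ x ih =>
      intro hx Y hY
      have h1 : {x' ∈ X | r x' x} ⊆ Y := by
        intro z hz
        exact ih z hz.2 hz.1 Y hY
      exact hY (hf h1 (hsupp x hx))
  exact H x hx
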